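/- Dual criterion: if ρ is a state on ℂ^d ⊗ ℂ^d and Λ is a two-decomposable map such that (Λ⊗1)(ρ) is not positive semidefinite, then ρ is one-distillable. -/

import Mathlib

open Matrix Kronecker BigOperators
open scoped ComplexOrder

noncomputable section

/-- `d × d` complex matrices. -/
abbrev Mat (d : ℕ) := Matrix (Fin d) (Fin d) ℂ

/-- Matrices on `ℂ^d ⊗ ℂ^d`, indexed by `Fin d × Fin d`. -/
abbrev Mat2 (d : ℕ) := Matrix (Fin d × Fin d) (Fin d × Fin d) ℂ

/-- Partial transpose on Bob's system: `(M^{T_B})_{(i,k),(j,l)} = M_{(i,l),(j,k)}`. -/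
def ptB {d : ℕ} (M : Mat2 d) : Mat2 d :=
  Matrix.of fun p q => M (p.1, q.2) (q.1, p.2)

/-- Schmidt rank of a vector `ψ : Fin d × Fin d → ℂ`: the rank of the `d × d`
matrix with `(i,j)` entry `ψ (i,j)`. -/
def schmidtRank {d : ℕ} (ψ : Fin d × Fin d → ℂ) : ℕ :=
  (Matrix.of fun i j => ψ (i, j) : Mat d).rank

/-- A state: positive semidefinite with trace one. -/
def IsState {d : ℕ} (ρ : Mat2 d) : Prop := ρ.PosSemidef ∧ ρ.trace = 1

/-- One-distillability: some Schmidt-rank-≤2 vector has negative expectation on `ρ^{T_B}`. -/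
def OneDistillable {d : ℕ} (ρ : Mat2 d) : Prop :=
  ∃ ψ : Fin d × Fin d → ℂ, schmidtRank ψ ≤ 2 ∧
    (star ψ ⬝ᵥ (ptB ρ).mulVec ψ).re < 0

/-- The rank-one matrix `|ψ⟩⟨ψ|`, with entries `ψ x * conj (ψ y)`. -/
def outer {d : ℕ} (ψ : Fin d × Fin d → ℂ) : Mat2 d :=
  Matrix.vecMulVec ψ (star ψ)

/-- The maximally entangled projector `P₊`, `(P₊)_{(i,k),(j,l)} = (1/d)·δ_{ik}·δ_{jl}`. -/
def Pplus (d : ℕ) : Mat2 d :=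
  Matrix.of fun p q =>
    ((if p.1 = p.2 then (1 : ℂ) else 0) * (if q.1 = q.2 then (1 : ℂ) else 0)) / d

/-- The flip operator `V_{(i,k),(j,l)} = δ_{il}·δ_{jk}`. -/
def flipOp (d : ℕ) : Mat2 d :=
  Matrix.of fun p q => if p.1 = q.2 ∧ q.1 = p.2 then (1 : ℂ) else 0

/-- The operator `Z = Σ_i |ii⟩⟨ii|`, `Z_{(i,k),(j,l)} = δ_{ik}·δ_{jl}·δ_{ij}`. -/
def Zop (d : ℕ) : Mat2 d :=
  Matrix.of fun p q => if p.1 = p.2 ∧ q.1 = q.2 ∧ p.1 = q.1 then (1 : ℂ) else 0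

/-- Partial trace over Alice: `(Tr_A M)_{k,l} = Σ_i M_{(i,k),(i,l)}`. -/
def trA {d : ℕ} (M : Mat2 d) : Mat d :=
  Matrix.of fun k l => ∑ i, M (i, k) (i, l)

/-- Alice's reduced state: `(ρ_A)_{i,j} = Σ_k ρ_{(i,k),(j,k)}`. -/
def redA {d : ℕ} (ρ : Mat2 d) : Mat d :=
  Matrix.of fun i j => ∑ k, ρ (i, k) (j, k)

/-- Bob's reduced state: `(ρ_B)_{k,l} = Σ_i ρ_{(i,k),(i,l)}`. -/
def redB {d : ℕ} (ρ : Mat2 d) : Mat d := trA ρ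

/-- `(1 ⊗ Λ)(M)`, acting with `Λ` on Bob's blocks. -/
def idTensor {d : ℕ} (Λ : Mat d → Mat d) (M : Mat2 d) : Mat2 d :=
  Matrix.of fun p q => Λ (Matrix.of fun k l => M (p.1, k) (q.1, l)) p.2 q.2

/-- `(Λ ⊗ 1)(M)`, acting with `Λ` on Alice's blocks. -/
def tensorId {d : ℕ} (Λ : Mat d → Mat d) (M : Mat2 d) : Mat2 d :=
  Matrix.of fun p q => Λ (Matrix.of fun i j => M (i, p.2) (j, q.2)) p.1 q.1

/-- `(1_k ⊗ Λ)(M)` for `M` indexed by `Fin k × Fin d`. -/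
def idTensorK {d : ℕ} (k : ℕ) (Λ : Mat d → Mat d)
    (M : Matrix (Fin k × Fin d) (Fin k × Fin d) ℂ) :
    Matrix (Fin k × Fin d) (Fin k × Fin d) ℂ :=
  Matrix.of fun p q => Λ (Matrix.of fun m n => M (p.1, m) (q.1, n)) p.2 q.2

/-- Two-decomposable maps: `Λ(X) = Σᵢ Vᵢ · Xᵀ · Vᵢ†` with each `Vᵢ` of rank at most 2. -/
def TwoDecomposable {d : ℕ} (Λ : Mat d → Mat d) : Prop :=
  ∃ (n : ℕ) (V : Fin n → Mat d), (∀ i, (V i).rank ≤ 2) ∧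
    ∀ X : Mat d, Λ X = ∑ i, V i * Xᵀ * (V i)ᴴ

/-- The diagonal part of a matrix (off-diagonal entries set to zero). -/
def diagPart {d : ℕ} (X : Mat d) : Mat d := Matrix.diagonal fun i => X i i


lemma sum4_perm {α : Type*} [Fintype α] (f g : (α×α) → (α×α) → α → α → ℂ)
    (h : ∀ i k j l b a, f (i,k) (j,l) b a = g (b,l) (a,k) i j) :
    ∑ p, ∑ q, ∑ b, ∑ a, f p q b a = ∑ p, ∑ q, ∑ b, ∑ a, g p q b a := by
  have hinv : Function.Involutive
      (fun t : (α×α) × (α×α) × α × α =>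
        (((t.2.2.1, t.2.1.2), (t.2.2.2, t.1.2), t.1.1, t.2.1.1) : (α×α) × (α×α) × α × α)) :=
    fun t => rfl
  calc ∑ p, ∑ q, ∑ b, ∑ a, f p q b a
      = ∑ t : (α×α) × (α×α) × α × α, f t.1 t.2.1 t.2.2.1 t.2.2.2 := by
        simp only [Fintype.sum_prod_type]
    _ = ∑ t : (α×α) × (α×α) × α × α, g t.1 t.2.1 t.2.2.1 t.2.2.2 := by
        refine Fintype.sum_equiv hinv.toPerm _ _ fun t => ?_
        obtain ⟨⟨i,k⟩,⟨j,l⟩,b,a⟩ := t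
        simpa [Function.Involutive.coe_toPerm] using h i k j l b a
    _ = ∑ p, ∑ q, ∑ b, ∑ a, g p q b a := by
        simp only [Fintype.sum_prod_type]

def psiV {d : ℕ} (V : Mat d) (φ : Fin d × Fin d → ℂ) : Fin d × Fin d → ℂ :=
  fun p => ∑ i, V i p.1 * star (φ (i, p.2))

lemma quad_single (d : ℕ) (V : Mat d) (ρ : Mat2 d) (φ : Fin d × Fin d → ℂ) :
    ∑ p, ∑ q, star (φ p) * ((V * (Matrix.of fun i j => ρ (i, p.2) (j, q.2))ᵀ * Vᴴ) p.1 q.1 * φ q)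
      = star (psiV V φ) ⬝ᵥ (ptB ρ).mulVec (psiV V φ) := by
  simp only [dotProduct, mulVec, psiV, ptB, Matrix.mul_apply, conjTranspose_apply,
    transpose_apply, of_apply, Pi.star_apply, star_sum, star_mul', star_star,
    Finset.sum_mul, Finset.mul_sum]
  apply sum4_perm
  intros; ring

lemma ptB_herm {d : ℕ} (ρ : Mat2 d) (hρ : ρ.IsHermitian) : (ptB ρ).IsHermitian := by
  ext p q
  simp only [conjTranspose_apply, ptB, of_apply]
  have := hρ.apply (p.1, q.2) (q.1, p.2)
  simpa [conjTranspose_apply] using this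

lemma quad_real {n : Type*} [Fintype n] (H : Matrix n n ℂ) (hH : H.IsHermitian)
    (x : n → ℂ) : (star x ⬝ᵥ H.mulVec x).im = 0 := by
  rw [← Complex.conj_eq_iff_im, starRingEnd_apply]
  simp only [dotProduct, mulVec, Finset.mul_sum, star_sum, star_mul', star_star, Pi.star_apply]
  rw [Finset.sum_comm]
  refine Finset.sum_congr rfl fun p _ => Finset.sum_congr rfl fun q _ => ?_
  have h1 : star (H q p) = H p q := by
    simpa [conjTranspose_apply] using hH.apply p q
  rw [← h1]
  ring

lemma tensorId_herm {d n : ℕ} (V : Fin n → Mat d) (ρ : Mat2 d) (hρ : ρ.IsHermitian) :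
    (tensorId (fun X => ∑ v, V v * Xᵀ * (V v)ᴴ) ρ).IsHermitian := by
  ext p q
  simp only [conjTranspose_apply, tensorId, of_apply, Matrix.sum_apply, Matrix.mul_apply,
    transpose_apply, star_sum, star_mul', star_star, Finset.sum_mul]
  refine Finset.sum_congr rfl fun v _ => ?_
  rw [Finset.sum_comm]
  refine Finset.sum_congr rfl fun b _ => Finset.sum_congr rfl fun a _ => ?_
  have h1 : star (ρ (a, q.2) (b, p.2)) = ρ (b, p.2) (a, q.2) := by
    simpa [conjTranspose_apply] using hρ.apply (b, p.2) (a, q.2)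
  rw [h1]
  ring

lemma sum_rot {β γ : Type*} [Fintype β] [Fintype γ] (f : β → β → γ → ℂ) :
    ∑ p, ∑ q, ∑ v, f p q v = ∑ v, ∑ p, ∑ q, f p q v := by
  have h1 : ∀ p, ∑ q, ∑ v, f p q v = ∑ v, ∑ q, f p q v := fun p => Finset.sum_comm
  simp_rw [h1]
  exact Finset.sum_comm

lemma quad_decomp {d n : ℕ} (V : Fin n → Mat d) (ρ : Mat2 d) (φ : Fin d × Fin d → ℂ) :
    star φ ⬝ᵥ (tensorId (fun X => ∑ v, V v * Xᵀ * (V v)ᴴ) ρ).mulVec φ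
      = ∑ v, star (psiV (V v) φ) ⬝ᵥ (ptB ρ).mulVec (psiV (V v) φ) := by
  have step : star φ ⬝ᵥ (tensorId (fun X => ∑ v, V v * Xᵀ * (V v)ᴴ) ρ).mulVec φ
      = ∑ v, ∑ p, ∑ q, star (φ p) *
          ((V v * (Matrix.of fun i j => ρ (i, p.2) (j, q.2))ᵀ * (V v)ᴴ) p.1 q.1 * φ q) := by
    simp only [tensorId, dotProduct, mulVec, of_apply, Matrix.sum_apply, Pi.star_apply,
      Finset.mul_sum, Finset.sum_mul]
    exact sum_rot _
  rw [step]
  exact Finset.sum_congr rfl fun v _ => quad_single d (V v) ρ φ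

lemma rank_psiV {d : ℕ} (V : Mat d) (φ : Fin d × Fin d → ℂ) :
    schmidtRank (psiV V φ) ≤ V.rank := by
  have heq : (Matrix.of fun a k => psiV V φ (a, k) : Mat d)
      = Vᵀ * (Matrix.of fun i k => star (φ (i, k))) := by
    ext a k
    simp [psiV, Matrix.mul_apply]
  rw [schmidtRank, heq]
  calc (Vᵀ * _).rank ≤ Vᵀ.rank := Matrix.rank_mul_le_left _ _
    _ = V.rank := Matrix.rank_transpose V


/-- dual criterion: if `(Λ⊗1)(ρ)` is not positive semidefinite
for a two-decomposable `Λ`, then `ρ` is one-distillable. -/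
theorem dual_criterion (d : ℕ) (hd : 2 ≤ d) (ρ : Mat2 d) (hρ : IsState ρ)
    (Λ : Mat d → Mat d) (hΛ : TwoDecomposable Λ)
    (h : ¬ (tensorId Λ ρ).PosSemidef) : OneDistillable ρ := by
  obtain ⟨n, V, hrank, hΛeq⟩ := hΛ
  have hρh : ρ.IsHermitian := hρ.1.1
  have hΛfun : tensorId Λ ρ = tensorId (fun X => ∑ v, V v * Xᵀ * (V v)ᴴ) ρ := by
    unfold tensorId
    ext p q
    simp only [of_apply]
    rw [hΛeq]
  have hMh : (tensorId Λ ρ).IsHermitian := by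
    rw [hΛfun]; exact tensorId_herm V ρ hρh
  have hex : ∃ x : Fin d × Fin d → ℂ, ¬ (0 ≤ star x ⬝ᵥ (tensorId Λ ρ).mulVec x) := by
    by_contra hc
    push_neg at hc
    exact h (Matrix.posSemidef_iff_dotProduct_mulVec.mpr ⟨hMh, hc⟩)
  obtain ⟨φ, hφ⟩ := hex
  have hquad : star φ ⬝ᵥ (tensorId Λ ρ).mulVec φ
      = ∑ v, star (psiV (V v) φ) ⬝ᵥ (ptB ρ).mulVec (psiV (V v) φ) := by
    rw [hΛfun]; exact quad_decomp V ρ φ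
  have him : ∀ v : Fin n, (star (psiV (V v) φ) ⬝ᵥ (ptB ρ).mulVec (psiV (V v) φ)).im = 0 :=
    fun v => quad_real _ (ptB_herm ρ hρh) _
  have hz_im : (star φ ⬝ᵥ (tensorId Λ ρ).mulVec φ).im = 0 := by
    rw [hquad, Complex.im_sum]
    exact Finset.sum_eq_zero fun v _ => him v
  have hre : (star φ ⬝ᵥ (tensorId Λ ρ).mulVec φ).re < 0 := by
    by_contra hc
    push_neg at hc
    exact hφ (Complex.le_def.mpr ⟨by simpa using hc, by simp [hz_im]⟩)
  have hsum : ∑ v : Fin n, (star (psiV (V v) φ) ⬝ᵥ (ptB ρ).mulVec (psiV (V v) φ)).re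
      < ∑ _v : Fin n, (0 : ℝ) := by
    rw [← Complex.re_sum, ← hquad]
    simpa using hre
  obtain ⟨v, _, hv⟩ := Finset.exists_lt_of_sum_lt hsum
  exact ⟨psiV (V v) φ, le_trans (rank_psiV (V v) φ) (hrank v), hv⟩
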